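/- Let ε ∈ (0, 1/180] and let n ≥ 1/(7ε²) be an integer. If H is an n-vertex F5-free 3-graph with minimum degree δ(H) > (1/12 + ε)n², then the shadow ∂H is K5-free: ∂H contains no complete subgraph on 5 vertices. -/

import Mathlib

open Finset

section Defs

variable {V : Type*} [DecidableEq V]

/-- The degree of a vertex `v` in the 3-graph `H`: the number of edges containing `v`. -/
def degH (H : Finset (Finset V)) (v : V) : ℕ :=
  (H.filter fun e => v ∈ e).card

/-- `H` contains a copy of the generalized triangle `F₅ = {abc, abd, cde}`. -/
def HasF5 (H : Finset (Finset V)) : Prop :=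
  ∃ a b c d e : V,
    a ≠ b ∧ a ≠ c ∧ a ≠ d ∧ a ≠ e ∧ b ≠ c ∧ b ≠ d ∧ b ≠ e ∧ c ≠ d ∧ c ≠ e ∧ d ≠ e ∧
    ({a, b, c} : Finset V) ∈ H ∧ ({a, b, d} : Finset V) ∈ H ∧ ({c, d, e} : Finset V) ∈ H

/-- `H` contains a copy of `K₄³⁻ = {abc, abd, acd}`. -/
def HasK43m (H : Finset (Finset V)) : Prop :=
  ∃ a b c d : V,
    a ≠ b ∧ a ≠ c ∧ a ≠ d ∧ b ≠ c ∧ b ≠ d ∧ c ≠ d ∧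
    ({a, b, c} : Finset V) ∈ H ∧ ({a, b, d} : Finset V) ∈ H ∧ ({a, c, d} : Finset V) ∈ H

/-- `H` is 3-partite: the vertex set can be partitioned into three parts so that every
edge has at most one vertex in each part. -/
def Tripartite (H : Finset (Finset V)) : Prop :=
  ∃ P : V → Fin 3, ∀ e ∈ H, ∀ u ∈ e, ∀ v ∈ e, u ≠ v → P u ≠ P v

/-- The shadow graph `∂H` of the 3-graph `H`: two distinct vertices are adjacent iff
they lie in a common edge of `H`. -/
def shadowG (H : Finset (Finset V)) : SimpleGraph V where
  Adj u v := u ≠ v ∧ ∃ e ∈ H, u ∈ e ∧ v ∈ e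
  symm := by
    constructor
    rintro u v ⟨hne, e, he, hu, hv⟩
    exact ⟨hne.symm, e, he, hv, hu⟩
  loopless := by constructor; rintro u ⟨hne, -⟩; exact hne rfl

end Defs

section AuxLemmas

variable {V : Type*} [DecidableEq V]

/-- The link of a vertex, as a finset of 2-element finsets. -/
def linkH (H : Finset (Finset V)) (v : V) : Finset (Finset V) :=
  (H.filter fun e => v ∈ e).image fun e => e.erase v

lemma mem_linkH {H : Finset (Finset V)} {v : V} {p : Finset V} :
    p ∈ linkH H v ↔ ∃ e ∈ H, v ∈ e ∧ e.erase v = p := by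
  simp [linkH, and_assoc]

lemma card_linkH (H : Finset (Finset V)) (v : V) : (linkH H v).card = degH H v := by
  apply card_image_of_injOn
  intro e₁ h₁ e₂ h₂ hee
  simp only [coe_filter, Set.mem_setOf_eq] at h₁ h₂
  have := congrArg (insert v) hee
  rwa [insert_erase h₁.2, insert_erase h₂.2] at this

lemma linkH_props {H : Finset (Finset V)} (h3 : ∀ e ∈ H, e.card = 3) {v : V} {p : Finset V}
    (hp : p ∈ linkH H v) : p.card = 2 ∧ v ∉ p ∧ insert v p ∈ H := by
  obtain ⟨e, he, hve, rfl⟩ := mem_linkH.mp hp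
  refine ⟨?_, notMem_erase v e, ?_⟩
  · rw [card_erase_of_mem hve, h3 e he]
  · rwa [insert_erase hve]

lemma turan_arith (k c : ℕ) (h2 : 2 ≤ c) (h5 : c ≤ 5) :
    2 * k ^ 2 + 5 * Nat.choose c 2 + 5 * (k * (c - 1)) ≤ 2 * (k + c) ^ 2 := by
  interval_cases c <;> simp [Nat.choose] <;> nlinarith

/-- Finset version of Turán's bound for graphs with no clique on 6 vertices. -/
lemma turan_finset_aux : ∀ (m : ℕ) (s : Finset V) (E : Finset (Finset V)), s.card ≤ m →
    (∀ p ∈ E, p.card = 2 ∧ p ⊆ s) →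
    (∀ q : Finset V, q ⊆ s → q.card = 6 →
      (∀ u ∈ q, ∀ v ∈ q, u ≠ v → ({u, v} : Finset V) ∈ E) → False) →
    5 * E.card ≤ 2 * s.card ^ 2 := by
  intro m
  induction m with
  | zero =>
    intro s E hsm hE _
    have hs : s = ∅ := card_eq_zero.mp (Nat.le_zero.mp hsm)
    have hEe : E = ∅ := by
      apply eq_empty_of_forall_notMem
      intro p hp
      obtain ⟨hp2, hps⟩ := hE p hp
      rw [hs, subset_empty] at hps
      rw [hps] at hp2; simp at hp2
    simp [hEe]
  | succ m ih =>
    intro s E hsm hE h6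
    rcases E.eq_empty_or_nonempty with rfl | ⟨p₀, hp₀⟩
    · simp
    set CL := s.powerset.filter
      (fun q => ∀ u ∈ q, ∀ v ∈ q, u ≠ v → ({u, v} : Finset V) ∈ E) with hCL
    have hmemCL : ∀ r, r ∈ CL ↔ r ⊆ s ∧
        (∀ u ∈ r, ∀ v ∈ r, u ≠ v → ({u, v} : Finset V) ∈ E) := by
      intro r; simp [hCL]
    have hp₀CL : p₀ ∈ CL := by
      obtain ⟨hp₀2, hp₀s⟩ := hE p₀ hp₀
      rw [hmemCL]
      refine ⟨hp₀s, fun u hu v hv huv => ?_⟩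
      have hsub : ({u, v} : Finset V) ⊆ p₀ := by
        intro x hx; simp only [mem_insert, mem_singleton] at hx
        rcases hx with rfl | rfl <;> assumption
      have hcuv : ({u, v} : Finset V).card = 2 := by
        rw [card_insert_of_notMem (by simpa using huv), card_singleton]
      have := eq_of_subset_of_card_le hsub (by omega)
      rwa [this]
    obtain ⟨q, hqCL, hqmax⟩ := exists_max_image CL card ⟨p₀, hp₀CL⟩
    rw [hmemCL] at hqCL
    obtain ⟨hqs, hqcl⟩ := hqCL
    have hc2 : 2 ≤ q.card := by
      have h1 := hqmax p₀ hp₀CL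
      have h2 := (hE p₀ hp₀).1
      omega
    have hc5 : q.card ≤ 5 := by
      by_contra hgt
      push_neg at hgt
      obtain ⟨q6, hq6q, hq6c⟩ := exists_subset_card_eq (s := q) (n := 6) (by omega)
      exact h6 q6 (hq6q.trans hqs) hq6c
        (fun u hu v hv huv => hqcl u (hq6q hu) v (hq6q hv) huv)
    have hks : (s \ q).card + q.card = s.card := card_sdiff_add_card_eq_card hqs
    have hkm : (s \ q).card ≤ m := by omega
    have hmaxq : ∀ v ∈ s \ q, ∃ u₀ ∈ q, ({v, u₀} : Finset V) ∉ E := by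
      intro v hv
      rw [mem_sdiff] at hv
      by_contra hcon
      push_neg at hcon
      have hinsCL : insert v q ∈ CL := by
        rw [hmemCL]
        refine ⟨insert_subset hv.1 hqs, fun x hx y hy hxy => ?_⟩
        rcases mem_insert.mp hx with rfl | hxq
        · rcases mem_insert.mp hy with rfl | hyq
          · exact absurd rfl hxy
          · exact hcon y hyq
        · rcases mem_insert.mp hy with rfl | hyq
          · rw [pair_comm]; exact hcon x hxq
          · exact hqcl x hxq y hyq hxy
      have := hqmax _ hinsCL
      rw [card_insert_of_notMem hv.2] at this
      omega
    set E₁ := E.filter (fun p => p ⊆ s \ q) with hE₁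
    set E₂ := E.filter (fun p => p ⊆ q) with hE₂
    set E₃ := E \ (E₁ ∪ E₂) with hE₃
    have hcards : E.card ≤ E₁.card + E₂.card + E₃.card := by
      have hsub : E ⊆ (E₁ ∪ E₂) ∪ E₃ := by
        intro p hp
        by_cases h : p ∈ E₁ ∪ E₂
        · exact mem_union_left _ h
        · exact mem_union_right _ (mem_sdiff.mpr ⟨hp, h⟩)
      calc E.card ≤ ((E₁ ∪ E₂) ∪ E₃).card := card_le_card hsub
        _ ≤ (E₁ ∪ E₂).card + E₃.card := card_union_le _ _
        _ ≤ E₁.card + E₂.card + E₃.card := by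
            have := card_union_le E₁ E₂; omega
    have hB1 : 5 * E₁.card ≤ 2 * (s \ q).card ^ 2 := by
      refine ih (s \ q) E₁ hkm ?_ ?_
      · intro p hp
        rw [hE₁, mem_filter] at hp
        exact ⟨(hE p hp.1).1, hp.2⟩
      · intro q' hq's hq'c hq'cl
        exact h6 q' (hq's.trans sdiff_subset) hq'c
          (fun u hu v hv huv => (mem_filter.mp (hq'cl u hu v hv huv)).1)
    have hB2 : E₂.card ≤ Nat.choose q.card 2 := by
      have hsub : E₂ ⊆ q.powersetCard 2 := by
        intro p hp
        rw [hE₂, mem_filter] at hp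
        rw [mem_powersetCard]
        exact ⟨hp.2, (hE p hp.1).1⟩
      calc E₂.card ≤ (q.powersetCard 2).card := card_le_card hsub
        _ = Nat.choose q.card 2 := by rw [card_powersetCard]
    have hB3 : E₃.card ≤ (s \ q).card * (q.card - 1) := by
      have hsub : E₃ ⊆ (s \ q).biUnion (fun v =>
          (q.filter (fun u => ({v, u} : Finset V) ∈ E)).image
            (fun u => ({v, u} : Finset V))) := by
        intro p hp
        rw [hE₃, mem_sdiff, mem_union, hE₁, hE₂, mem_filter, mem_filter] at hp
        obtain ⟨hpE, hcon⟩ := hp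
        push_neg at hcon
        have hns' : ¬ p ⊆ s \ q := hcon.1 hpE
        have hnq : ¬ p ⊆ q := hcon.2 hpE
        obtain ⟨hp2, hps⟩ := hE p hpE
        obtain ⟨x, hxp, hxns'⟩ := not_subset.mp hns'
        obtain ⟨y, hyp, hynq⟩ := not_subset.mp hnq
        have hxq : x ∈ q := by
          by_contra hxq
          exact hxns' (mem_sdiff.mpr ⟨hps hxp, hxq⟩)
        have hys' : y ∈ s \ q := mem_sdiff.mpr ⟨hps hyp, hynq⟩
        have hxy : x ≠ y := fun h => hynq (h ▸ hxq)
        have hpeq : ({y, x} : Finset V) = p := by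
          apply eq_of_subset_of_card_le
          · intro a ha; simp only [mem_insert, mem_singleton] at ha
            rcases ha with rfl | rfl <;> assumption
          · rw [hp2]
            rw [card_insert_of_notMem (by simpa using hxy.symm), card_singleton]
        rw [mem_biUnion]
        refine ⟨y, hys', ?_⟩
        rw [mem_image]
        exact ⟨x, mem_filter.mpr ⟨hxq, by rw [hpeq]; exact hpE⟩, hpeq⟩
      calc E₃.card
          ≤ ∑ v ∈ s \ q, ((q.filter (fun u => ({v, u} : Finset V) ∈ E)).image
              (fun u => ({v, u} : Finset V))).card :=
            (card_le_card hsub).trans card_biUnion_le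
        _ ≤ ∑ _v ∈ s \ q, (q.card - 1) := by
            apply sum_le_sum
            intro v hv
            obtain ⟨u₀, hu₀q, hu₀⟩ := hmaxq v hv
            calc ((q.filter (fun u => ({v, u} : Finset V) ∈ E)).image
                  (fun u => ({v, u} : Finset V))).card
                ≤ (q.filter (fun u => ({v, u} : Finset V) ∈ E)).card := card_image_le
              _ ≤ (q.erase u₀).card := by
                  apply card_le_card
                  intro u hu
                  rw [mem_filter] at hu
                  rw [mem_erase]
                  exact ⟨fun h => hu₀ (h ▸ hu.2), hu.1⟩
              _ = q.card - 1 := card_erase_of_mem hu₀q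
        _ = (s \ q).card * (q.card - 1) := by rw [sum_const, smul_eq_mul]
    have harith := turan_arith (s \ q).card q.card hc2 hc5
    calc 5 * E.card ≤ 5 * E₁.card + 5 * E₂.card + 5 * E₃.card := by omega
      _ ≤ 2 * (s \ q).card ^ 2 + 5 * Nat.choose q.card 2
            + 5 * ((s \ q).card * (q.card - 1)) := by omega
      _ ≤ 2 * ((s \ q).card + q.card) ^ 2 := harith
      _ = 2 * s.card ^ 2 := by rw [hks]

lemma sum_link_card_le (L : V → Finset (Finset V)) (N : ℕ) :
    ∀ s : Finset V, (∀ u ∈ s, ∀ v ∈ s, u ≠ v → (L u ∩ L v).card ≤ N) →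
      ∑ v ∈ s, (L v).card ≤ (s.biUnion L).card + s.card * s.card * N := by
  intro s
  induction s using Finset.induction_on with
  | empty => simp
  | @insert a s ha ih =>
    intro hs
    have hss : ∀ u ∈ s, ∀ v ∈ s, u ≠ v → (L u ∩ L v).card ≤ N := fun u hu v hv h =>
      hs u (mem_insert_of_mem hu) v (mem_insert_of_mem hv) h
    have IH := ih hss
    rw [sum_insert ha, biUnion_insert]
    have hinter : (L a ∩ s.biUnion L).card ≤ s.card * N := by
      have hsub : L a ∩ s.biUnion L ⊆ s.biUnion (fun v => L a ∩ L v) := by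
        intro p hp
        rw [mem_inter, mem_biUnion] at hp
        obtain ⟨hpa, v, hv, hpv⟩ := hp
        rw [mem_biUnion]
        exact ⟨v, hv, mem_inter.mpr ⟨hpa, hpv⟩⟩
      calc (L a ∩ s.biUnion L).card ≤ (s.biUnion (fun v => L a ∩ L v)).card :=
            card_le_card hsub
        _ ≤ ∑ v ∈ s, (L a ∩ L v).card := card_biUnion_le
        _ ≤ ∑ _v ∈ s, N := sum_le_sum (fun v hv => hs a (mem_insert_self a s) v
            (mem_insert_of_mem hv) (fun h => ha (h ▸ hv)))
        _ = s.card * N := by rw [sum_const, smul_eq_mul]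
    have hunion := card_union_add_card_inter (L a) (s.biUnion L)
    have hcard : (insert a s).card = s.card + 1 := card_insert_of_notMem ha
    have hkey : (L a).card + (s.biUnion L).card ≤ (L a ∪ s.biUnion L).card + s.card * N := by
      omega
    rw [hcard]
    have harith : s.card * N + s.card * s.card * N ≤ (s.card + 1) * (s.card + 1) * N := by
      nlinarith
    omega

variable [Fintype V]

/-- Key F5-freeness consequence: links of two adjacent vertices barely overlap. -/
lemma link_inter_le {H : Finset (Finset V)} (h3 : ∀ e ∈ H, e.card = 3) (hF5 : ¬ HasF5 H)
    {u u' : V} (hne : u ≠ u') {e₀ : Finset V} (he₀ : e₀ ∈ H) (hu : u ∈ e₀) (hu' : u' ∈ e₀) :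
    (linkH H u ∩ linkH H u').card ≤ Fintype.card V := by
  have hcard : e₀.card = 3 := h3 e₀ he₀
  have hpair : ({u, u'} : Finset V) ⊆ e₀ := by
    intro x hx; simp only [mem_insert, mem_singleton] at hx; rcases hx with rfl | rfl <;> assumption
  have hpc : ({u, u'} : Finset V).card = 2 := by
    rw [card_insert_of_notMem (by simpa using hne), card_singleton]
  have hsd : (e₀ \ {u, u'}).Nonempty := by
    rw [← card_pos, card_sdiff_of_subset hpair, hcard, hpc]; norm_num
  obtain ⟨w, hw⟩ := hsd
  rw [mem_sdiff, mem_insert, mem_singleton] at hw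
  obtain ⟨hwe, hwuu'⟩ := hw
  push_neg at hwuu'
  obtain ⟨hwu, hwu'⟩ := hwuu'
  have he₀eq : ({u, u', w} : Finset V) = e₀ := by
    apply eq_of_subset_of_card_le
    · intro x hx; simp only [mem_insert, mem_singleton] at hx
      rcases hx with rfl | rfl | rfl <;> assumption
    · rw [hcard]
      rw [card_insert_of_notMem, card_insert_of_notMem (by simp [hwu'.symm]),
        card_singleton]
      simp only [mem_insert, mem_singleton, not_or]
      exact ⟨hne, hwu.symm⟩
  have key : ∀ p ∈ linkH H u ∩ linkH H u', w ∈ p := by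
    intro p hp
    rw [mem_inter] at hp
    obtain ⟨hc2, hup, hins⟩ := linkH_props h3 hp.1
    obtain ⟨-, hu'p, hins'⟩ := linkH_props h3 hp.2
    by_contra hwp
    obtain ⟨y, z, hyz, rfl⟩ := card_eq_two.mp hc2
    simp only [mem_insert, mem_singleton, not_or] at hup hu'p hwp
    apply hF5
    refine ⟨y, z, u, u', w, hyz, fun h => hup.1 h.symm, fun h => hu'p.1 h.symm,
      fun h => hwp.1 h.symm, fun h => hup.2 h.symm, fun h => hu'p.2 h.symm,
      fun h => hwp.2 h.symm, hne, hwu.symm, hwu'.symm, ?_, ?_, ?_⟩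
    · have : ({y, z, u} : Finset V) = insert u {y, z} := by
        ext a; simp only [mem_insert, mem_singleton]; tauto
      rwa [this]
    · have : ({y, z, u'} : Finset V) = insert u' {y, z} := by
        ext a; simp only [mem_insert, mem_singleton]; tauto
      rwa [this]
    · rwa [he₀eq]
  calc (linkH H u ∩ linkH H u').card
      ≤ ((univ : Finset V).powersetCard 1).card := by
        apply card_le_card_of_injOn (fun p => p.erase w)
        · intro p hp
          obtain ⟨hc2, -, -⟩ := linkH_props h3 (mem_inter.mp hp).1
          simp only [mem_coe, mem_powersetCard]
          exact ⟨subset_univ _, by rw [card_erase_of_mem (key p hp), hc2]⟩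
        · intro p₁ h₁ p₂ h₂ hee
          have e1 : insert w (p₁.erase w) = p₁ := insert_erase (key p₁ (mem_coe.mp h₁))
          have e2 : insert w (p₂.erase w) = p₂ := insert_erase (key p₂ (mem_coe.mp h₂))
          simp only at hee
          rw [← e1, ← e2, hee]
    _ = Fintype.card V := by rw [card_powersetCard, card_univ, Nat.choose_one_right]

end AuxLemmas

/-- For `ε ∈ (0, 1/180]` and `n ≥ 1/(7ε²)`, every `n`-vertex `F₅`-free 3-graph with
minimum degree greater than `(1/12 + ε)n²` has a `K₅`-free shadow. -/
theorem F5_shadow_K5_free (ε : ℝ) (hε0 : 0 < ε) (hε : ε ≤ 1 / 180)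
    (n : ℕ) (hn : 1 / (7 * ε ^ 2) ≤ (n : ℝ))
    (V : Type*) [Fintype V] [DecidableEq V] (hV : Fintype.card V = n)
    (H : Finset (Finset V)) (h3 : ∀ e ∈ H, e.card = 3)
    (hF5 : ¬ HasF5 H)
    (hδ : ∀ v : V, (1 / 12 + ε) * (n : ℝ) ^ 2 < (degH H v : ℝ)) :
    (shadowG H).CliqueFree 5 := by
  intro t ht
  have htc : t.card = 5 := ht.2
  have hcov : ∀ u ∈ t, ∀ v ∈ t, u ≠ v → ∃ e ∈ H, u ∈ e ∧ v ∈ e := by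
    intro u hu v hv huv
    exact (ht.1 (mem_coe.mpr hu) (mem_coe.mpr hv) huv).2
  -- basic real estimates
  have hε2pos : (0 : ℝ) < 7 * ε ^ 2 := by positivity
  have h7 : (1 : ℝ) ≤ 7 * ε ^ 2 * n := by
    rw [div_le_iff₀ hε2pos] at hn
    nlinarith [hn]
  have hεinv : (180 : ℝ) * ε ≤ 1 := by linarith
  have hεn : (180 / 7 : ℝ) ≤ ε * n := by
    have h0 : (0 : ℝ) ≤ 7 * ε * n := by positivity
    have h1 : 7 * ε * n * (180 * ε) ≤ 7 * ε * n * 1 :=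
      mul_le_mul_of_nonneg_left hεinv h0
    nlinarith [h7]
  have hnR : (4628 : ℝ) ≤ (n : ℝ) := by
    have h1 : ε ^ 2 ≤ (1 / 180) ^ 2 := by nlinarith
    have h3' : (4628 : ℝ) ≤ 1 / (7 * ε ^ 2) := by
      rw [le_div_iff₀ hε2pos]
      nlinarith
    linarith
  have hn0 : 0 < n := by
    by_contra h
    push_neg at h
    interval_cases n
    norm_num at hnR
  -- the shadow pairs
  set SP := ((univ : Finset V).powersetCard 2).filter (fun p => ∃ e ∈ H, p ⊆ e) with hSP
  have hSPle : SP.card ≤ Nat.choose n 2 := by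
    calc SP.card ≤ ((univ : Finset V).powersetCard 2).card := card_filter_le _ _
      _ = Nat.choose n 2 := by rw [card_powersetCard, card_univ, hV]
  -- counting over any cover-clique
  have hcount : ∀ s : Finset V, (∀ u ∈ s, ∀ v ∈ s, u ≠ v → ∃ e ∈ H, u ∈ e ∧ v ∈ e) →
      ∑ v ∈ s, degH H v ≤ SP.card + s.card * s.card * n := by
    intro s hs
    have h1 : ∑ v ∈ s, degH H v = ∑ v ∈ s, (linkH H v).card := by
      apply sum_congr rfl
      intro v _
      rw [card_linkH]
    rw [h1]
    have h2 := sum_link_card_le (linkH H) n s (by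
      intro u hu v hv huv
      obtain ⟨e₀, he₀, hue, hve⟩ := hs u hu v hv huv
      have := link_inter_le h3 hF5 huv he₀ hue hve
      rwa [hV] at this)
    refine h2.trans ?_
    have hbisub : s.biUnion (linkH H) ⊆ SP := by
      intro p hp
      rw [mem_biUnion] at hp
      obtain ⟨v, hv, hpv⟩ := hp
      obtain ⟨hc2, hvp, hins⟩ := linkH_props h3 hpv
      rw [hSP, mem_filter, mem_powersetCard]
      exact ⟨⟨subset_univ _, hc2⟩, insert v p, hins, subset_insert _ _⟩
    have := card_le_card hbisub
    omega
  -- lower bound for sums of degrees (real)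
  have hlow : ∀ s : Finset V, s.Nonempty →
      (s.card : ℝ) * ((1 / 12 + ε) * (n : ℝ) ^ 2) < ((∑ v ∈ s, degH H v : ℕ) : ℝ) := by
    intro s hsne
    have h := sum_lt_sum_of_nonempty hsne
      (f := fun _ => (1 / 12 + ε) * (n : ℝ) ^ 2)
      (g := fun v => (degH H v : ℝ)) (fun v _ => hδ v)
    rw [sum_const, nsmul_eq_mul] at h
    rwa [Nat.cast_sum]
  -- no clique on six vertices
  have no6 : ∀ s : Finset V, s.card = 6 →
      (∀ u ∈ s, ∀ v ∈ s, u ≠ v → ∃ e ∈ H, u ∈ e ∧ v ∈ e) → False := by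
    intro s hs6 hscov
    have hup := hcount s hscov
    rw [hs6] at hup
    have hch : 2 * Nat.choose n 2 ≤ n ^ 2 := by
      rw [Nat.choose_two_right]
      have h1 := Nat.div_mul_le_self (n * (n - 1)) 2
      have h2 : n * (n - 1) ≤ n ^ 2 := by
        rcases n with _ | m
        · simp
        · simp only [Nat.succ_sub_one]
          nlinarith
      omega
    have hup2 : 2 * (∑ v ∈ s, degH H v) ≤ n ^ 2 + 72 * n := by omega
    have hup2R : 2 * ((∑ v ∈ s, degH H v : ℕ) : ℝ) ≤ (n : ℝ) ^ 2 + 72 * n := by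
      exact_mod_cast hup2
    have hlo := hlow s (by rw [← card_pos, hs6]; norm_num)
    rw [hs6] at hlo
    simp only [Nat.cast_ofNat] at hlo
    have hmul : (180 / 7 : ℝ) * n ≤ ε * n * n :=
      mul_le_mul_of_nonneg_right hεn (Nat.cast_nonneg n)
    nlinarith [hnR]
  -- Turán's bound for the shadow pairs
  have hturan : 5 * SP.card ≤ 2 * n ^ 2 := by
    have hres := turan_finset_aux (V := V) n univ SP (by rw [card_univ, hV]) ?_ ?_
    · rwa [card_univ, hV] at hres
    · intro p hp
      rw [hSP, mem_filter, mem_powersetCard] at hp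
      exact ⟨hp.1.2, subset_univ _⟩
    · intro q _ hq6 hqcl
      refine no6 q hq6 ?_
      intro u hu v hv huv
      have hm := hqcl u hu v hv huv
      rw [hSP, mem_filter] at hm
      obtain ⟨-, e, he, hsube⟩ := hm
      exact ⟨e, he, hsube (mem_insert_self _ _), hsube (by simp)⟩
  -- final contradiction
  have hup := hcount t hcov
  rw [htc] at hup
  have hup5 : 5 * (∑ v ∈ t, degH H v) ≤ 2 * n ^ 2 + 125 * n := by omega
  have hup5R : 5 * ((∑ v ∈ t, degH H v : ℕ) : ℝ) ≤ 2 * (n : ℝ) ^ 2 + 125 * n := by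
    exact_mod_cast hup5
  have hlo := hlow t (by rw [← card_pos, htc]; norm_num)
  rw [htc] at hlo
  simp only [Nat.cast_ofNat] at hlo
  have hsq : (4628 : ℝ) * n ≤ (n : ℝ) * n :=
    mul_le_mul_of_nonneg_right hnR (Nat.cast_nonneg n)
  have hεnn : (0 : ℝ) ≤ ε * (n : ℝ) ^ 2 := by positivity
  nlinarith [hnR]
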